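/- Let G be a finite group, H ≤ G a subgroup, x_1 = 1, x_2, …, x_s a complete set of representatives for the double cosets of H in G, and let V be an irreducible finite-dimensional complex representation of G. Then in the complex group algebra ℂ[G]: p_H · e_V = (dim V / |G|) · ∑_{i=1}^s |H ∩ x_i H x_i⁻¹| · χ_V(q_i^∨) · q_i, where q_i := (1/|H|) · ∑_{y ∈ Hx_iH} y and q_i^∨ := (1/|H|) · ∑_{y ∈ Hx_iH} y⁻¹. -/

import Mathlib

open scoped Classical

/-- The averaging idempotent `p_H = (1/|H|) ∑_{h ∈ H} h` in the complex group algebra. -/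
noncomputable def avgIdemC {G : Type*} [Group G] [Fintype G] (H : Subgroup G) :
    MonoidAlgebra ℂ G :=
  (Nat.card H : ℂ)⁻¹ • ∑ h ∈ (H : Set G).toFinset, MonoidAlgebra.single h (1 : ℂ)

/-- The double coset `HxH` as a finset. -/
noncomputable def dosetFinset {G : Type*} [Group G] [Fintype G] (H : Subgroup G) (x : G) :
    Finset G :=
  {y : G | ∃ h ∈ H, ∃ h' ∈ H, y = h * x * h'}.toFinset

/-- `|H ∩ xHx⁻¹|`. -/
noncomputable def interConjCard {G : Type*} [Group G] [Fintype G] (H : Subgroup G) (x : G) :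
    ℕ :=
  Nat.card {g : G // g ∈ H ∧ ∃ h ∈ H, g = x * h * x⁻¹}

/-- The character of a finite-dimensional representation. -/
noncomputable def repChar {G V : Type*} [Group G] [AddCommGroup V] [Module ℂ V]
    (ρ : Representation ℂ G V) (g : G) : ℂ :=
  LinearMap.trace ℂ V (ρ g)

/-- Irreducibility: `V` is nonzero and has no proper nonzero `G`-invariant subspace. -/
def IsIrreducibleRep {G V : Type*} [Group G] [AddCommGroup V] [Module ℂ V]
    (ρ : Representation ℂ G V) : Prop :=
  Nontrivial V ∧ ∀ W : Submodule ℂ V, (∀ g : G, ∀ v ∈ W, ρ g v ∈ W) → W = ⊥ ∨ W = ⊤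

/-- The central idempotent `e_V = (dim V / |G|) ∑_{g} χ_V(g⁻¹) g` of `ℂ[G]`. -/
noncomputable def centralIdem {G V : Type*} [Group G] [Fintype G] [AddCommGroup V]
    [Module ℂ V] (ρ : Representation ℂ G V) : MonoidAlgebra ℂ G :=
  ((Module.finrank ℂ V : ℂ) / (Fintype.card G : ℂ)) •
    ∑ g : G, repChar ρ g⁻¹ • MonoidAlgebra.single g (1 : ℂ)

/-- The Hecke algebra basis element `q_x = (1/|H|) ∑_{y ∈ HxH} y`. -/
noncomputable def heckeElt {G : Type*} [Group G] [Fintype G] (H : Subgroup G) (x : G) :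
    MonoidAlgebra ℂ G :=
  (Nat.card H : ℂ)⁻¹ • ∑ y ∈ dosetFinset H x, MonoidAlgebra.single y (1 : ℂ)

section Aux

set_option linter.unusedSectionVars false

variable {G V : Type*} [Group G] [Fintype G] [AddCommGroup V] [Module ℂ V]
  [FiniteDimensional ℂ V]

lemma repChar_comm (ρ : Representation ℂ G V) (a b : G) :
    repChar ρ (a * b) = repChar ρ (b * a) := by
  simp only [repChar, map_mul]
  exact LinearMap.trace_mul_comm ℂ (ρ a) (ρ b)

lemma mem_dosetFinset {H : Subgroup G} {x y : G} :
    y ∈ dosetFinset H x ↔ ∃ a ∈ H, ∃ b ∈ H, y = a * x * b := by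
  simp [dosetFinset, Set.mem_toFinset]

-- Lemma A
lemma sum_char_coset (ρ : Representation ℂ G V) (H : Subgroup G) (x a b : G)
    (ha : a ∈ H) (hb : b ∈ H) :
    ∑ h ∈ (H : Set G).toFinset, repChar ρ ((a * x * b)⁻¹ * h)
      = ∑ h ∈ (H : Set G).toFinset, repChar ρ (x⁻¹ * h) := by
  rw [Finset.sum_nbij' (i := fun h => a⁻¹ * h * b⁻¹) (j := fun h => a * h * b)]
  · intro h hh
    simp only [Set.mem_toFinset, SetLike.mem_coe] at *
    exact H.mul_mem (H.mul_mem (H.inv_mem ha) hh) (H.inv_mem hb)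
  · intro h hh
    simp only [Set.mem_toFinset, SetLike.mem_coe] at *
    exact H.mul_mem (H.mul_mem ha hh) hb
  · intro h _; group
  · intro h _; group
  · intro h _
    have e1 : (a * x * b)⁻¹ * h = b⁻¹ * (x⁻¹ * a⁻¹ * h) := by group
    rw [e1, repChar_comm]
    congr 1; group

-- Lemma B
lemma sum_char_double (ρ : Representation ℂ G V) (H : Subgroup G) (x : G) :
    ∑ p ∈ (H : Set G).toFinset ×ˢ (H : Set G).toFinset, repChar ρ (p.1 * x * p.2)⁻¹
      = (Nat.card H : ℂ) * ∑ h ∈ (H : Set G).toFinset, repChar ρ (x⁻¹ * h) := by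
  rw [Finset.sum_product_right]
  have key : ∀ h' ∈ (H : Set G).toFinset,
      ∑ h ∈ (H : Set G).toFinset, repChar ρ (h * x * h')⁻¹
        = ∑ u ∈ (H : Set G).toFinset, repChar ρ (x⁻¹ * u) := by
    intro h' hh'
    simp only [Set.mem_toFinset, SetLike.mem_coe] at hh'
    rw [Finset.sum_nbij' (i := fun h => h⁻¹ * h'⁻¹) (j := fun u => h'⁻¹ * u⁻¹)]
    · intro h hh
      simp only [Set.mem_toFinset, SetLike.mem_coe] at *
      exact H.mul_mem (H.inv_mem hh) (H.inv_mem hh')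
    · intro u hu
      simp only [Set.mem_toFinset, SetLike.mem_coe] at *
      exact H.mul_mem (H.inv_mem hh') (H.inv_mem hu)
    · intro h _; group
    · intro u _; group
    · intro h _
      have e1 : (h * x * h')⁻¹ = h'⁻¹ * (x⁻¹ * h⁻¹) := by group
      rw [e1, repChar_comm]
      congr 1; group
  rw [Finset.sum_congr rfl key, Finset.sum_const, nsmul_eq_mul]
  congr 1
  simp [Set.toFinset_card, Nat.card_eq_fintype_card]

-- fiber cardinality
lemma fiber_card (H : Subgroup G) (x y : G) (hy : y ∈ dosetFinset H x) :
    ((((H : Set G).toFinset ×ˢ (H : Set G).toFinset).filter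
        fun p => p.1 * x * p.2 = y)).card = interConjCard H x := by
  obtain ⟨a, ha, b, hb, rfl⟩ := mem_dosetFinset.mp hy
  rw [interConjCard, Nat.card_eq_fintype_card, Fintype.card_subtype]
  apply Finset.card_nbij' (i := fun p => a⁻¹ * p.1)
    (j := fun k => (a * k, x⁻¹ * k⁻¹ * x * b))
  · rintro ⟨h, h'⟩ hp
    simp only [Finset.mem_filter, Finset.mem_product, Set.mem_toFinset,
      SetLike.mem_coe] at hp
    obtain ⟨⟨hh, hh'⟩, heq⟩ := hp
    simp only [Finset.mem_filter, Finset.mem_univ, true_and, Finset.mem_filter_univ]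
    refine (Finset.mem_filter_univ _).mpr ⟨H.mul_mem (H.inv_mem ha) hh, b * h'⁻¹, H.mul_mem hb (H.inv_mem hh'), ?_⟩
    have heq1 : h * x * h' * (a * x * b)⁻¹ = 1 := mul_inv_eq_one.2 heq
    rw [← mul_inv_eq_one]
    have key : a⁻¹ * h * (x * (b * h'⁻¹) * x⁻¹)⁻¹
        = a⁻¹ * (h * x * h' * (a * x * b)⁻¹) * a := by group
    rw [key, heq1]; group
  · intro k hk
    replace hk := (Finset.mem_filter_univ _).mp hk
    obtain ⟨hkH, h₀, hh₀, rfl⟩ := hk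
    simp only [Finset.mem_filter, Finset.mem_product, Set.mem_toFinset, SetLike.mem_coe]
    constructor
    · constructor
      · exact H.mul_mem ha hkH
      · have e : x⁻¹ * (x * h₀ * x⁻¹)⁻¹ * x * b = h₀⁻¹ * b := by group
        rw [e]; exact H.mul_mem (H.inv_mem hh₀) hb
    · group
  · rintro ⟨h, h'⟩ hp
    simp only [Finset.mem_filter, Finset.mem_product, Set.mem_toFinset,
      SetLike.mem_coe] at hp
    obtain ⟨⟨hh, hh'⟩, heq⟩ := hp
    have heq1 : h * x * h' * (a * x * b)⁻¹ = 1 := mul_inv_eq_one.2 heq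
    refine Prod.ext (by group) ?_
    show x⁻¹ * (a⁻¹ * h)⁻¹ * x * b = h'
    rw [← mul_inv_eq_one]
    have key : x⁻¹ * (a⁻¹ * h)⁻¹ * x * b * h'⁻¹
        = (x⁻¹ * h⁻¹) * (h * x * h' * (a * x * b)⁻¹)⁻¹ * (x⁻¹ * h⁻¹)⁻¹ := by group
    rw [key, heq1]; group
  · intro k _
    group

-- Lemma C
lemma sum_char_fiber (ρ : Representation ℂ G V) (H : Subgroup G) (x : G) :
    ∑ p ∈ (H : Set G).toFinset ×ˢ (H : Set G).toFinset, repChar ρ (p.1 * x * p.2)⁻¹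
      = (interConjCard H x : ℂ) * ∑ y ∈ dosetFinset H x, repChar ρ y⁻¹ := by
  rw [← Finset.sum_fiberwise_of_maps_to' (g := fun p : G × G => p.1 * x * p.2)
      (t := dosetFinset H x) ?_ (fun y => repChar ρ y⁻¹)]
  · rw [Finset.mul_sum]
    refine Finset.sum_congr rfl fun y hy => ?_
    rw [Finset.sum_const, nsmul_eq_mul, fiber_card H x y hy]
  · rintro ⟨h, h'⟩ hp
    simp only [Finset.mem_product, Set.mem_toFinset, SetLike.mem_coe] at hp
    exact mem_dosetFinset.mpr ⟨h, hp.1, h', hp.2, rfl⟩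

-- Key pointwise identity
lemma key_scalar (ρ : Representation ℂ G V) (H : Subgroup G) (x z : G)
    (hz : z ∈ dosetFinset H x) :
    ∑ h ∈ (H : Set G).toFinset, repChar ρ (z⁻¹ * h)
      = (interConjCard H x : ℂ) *
          ((Nat.card H : ℂ)⁻¹ * ∑ y ∈ dosetFinset H x, repChar ρ y⁻¹) := by
  obtain ⟨a, ha, b, hb, rfl⟩ := mem_dosetFinset.mp hz
  rw [sum_char_coset ρ H x a b ha hb]
  have h1 : (Nat.card H : ℂ) * ∑ h ∈ (H : Set G).toFinset, repChar ρ (x⁻¹ * h)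
      = (interConjCard H x : ℂ) * ∑ y ∈ dosetFinset H x, repChar ρ y⁻¹ :=
    (sum_char_double ρ H x).symm.trans (sum_char_fiber ρ H x)
  have hc : (Nat.card H : ℂ) ≠ 0 := Nat.cast_ne_zero.mpr Nat.card_pos.ne'
  rw [mul_left_comm, ← h1, inv_mul_cancel_left₀ hc]

end Aux

theorem avgIdem_mul_centralIdem_eq {G V : Type*} [Group G] [Fintype G]
    [AddCommGroup V] [Module ℂ V] [FiniteDimensional ℂ V]
    (ρ : Representation ℂ G V) (hirr : IsIrreducibleRep ρ)
    (H : Subgroup G) (s : ℕ) (hs : 0 < s) (x : Fin s → G) (hx1 : x ⟨0, hs⟩ = 1)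
    (hreps : ∀ g : G, ∃! i : Fin s, ∃ h ∈ H, ∃ h' ∈ H, g = h * x i * h') :
    avgIdemC H * centralIdem ρ =
      ((Module.finrank ℂ V : ℂ) / (Fintype.card G : ℂ)) •
        ∑ i : Fin s,
          ((interConjCard H (x i) : ℂ) *
              ((Nat.card H : ℂ)⁻¹ * ∑ y ∈ dosetFinset H (x i), repChar ρ y⁻¹)) •
            heckeElt H (x i) := by
  classical
  set d : ℂ := (Module.finrank ℂ V : ℂ) / (Fintype.card G : ℂ) with hd
  set c : ℂ := (Nat.card H : ℂ) with hc
  set Hf := (H : Set G).toFinset with hHf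
  -- Step 1: the product
  have hmul : (∑ h ∈ Hf, MonoidAlgebra.single h (1 : ℂ)) *
      (∑ g : G, repChar ρ g⁻¹ • MonoidAlgebra.single g (1 : ℂ))
      = ∑ z : G, (∑ h ∈ Hf, repChar ρ (z⁻¹ * h)) • MonoidAlgebra.single z (1 : ℂ) := by
    rw [Finset.sum_mul_sum]
    have inner : ∀ h ∈ Hf,
        ∑ g : G, MonoidAlgebra.single h (1 : ℂ) * (repChar ρ g⁻¹ • MonoidAlgebra.single g 1)
          = ∑ z : G, repChar ρ (z⁻¹ * h) • MonoidAlgebra.single z (1 : ℂ) := by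
      intro h _
      refine Fintype.sum_bijective (fun g => h * g)
        (Group.mulLeft_bijective h) _ _ fun g => ?_
      rw [mul_smul_comm, MonoidAlgebra.single_mul_single, one_mul]
      congr 2
      group
    rw [Finset.sum_congr rfl inner, Finset.sum_comm]
    exact Finset.sum_congr rfl fun z _ => (Finset.sum_smul).symm
  -- Step 2: partition of G into double cosets
  have hdisj : ((Finset.univ : Finset (Fin s)) : Set (Fin s)).PairwiseDisjoint
      (fun i => dosetFinset H (x i)) := by
    intro i _ j _ hij
    refine Finset.disjoint_left.mpr fun z hzi hzj => hij ?_
    obtain ⟨ai, hai, bi, hbi, hei⟩ := mem_dosetFinset.mp hzi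
    obtain ⟨aj, haj, bj, hbj, hej⟩ := mem_dosetFinset.mp hzj
    obtain ⟨k, _, huniq⟩ := hreps z
    exact (huniq i ⟨ai, hai, bi, hbi, hei⟩).trans (huniq j ⟨aj, haj, bj, hbj, hej⟩).symm
  have hpart : (Finset.univ : Finset G)
      = Finset.univ.biUnion (fun i : Fin s => dosetFinset H (x i)) := by
    refine Finset.ext fun z => ?_
    simp only [Finset.mem_univ, Finset.mem_biUnion, true_iff]
    obtain ⟨i, ⟨a, ha, b, hb, he⟩, _⟩ := hreps z
    exact ⟨i, trivial, mem_dosetFinset.mpr ⟨a, ha, b, hb, he⟩⟩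
  -- Step 3: assemble
  unfold avgIdemC centralIdem heckeElt
  rw [smul_mul_assoc, mul_smul_comm, hmul, smul_comm]
  congr 1
  simp only [Finset.smul_sum, smul_smul]
  rw [hpart, Finset.sum_biUnion hdisj]
  refine Finset.sum_congr rfl fun i _ => Finset.sum_congr rfl fun z hz => ?_
  rw [key_scalar ρ H (x i) z hz, mul_comm]
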